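/- There is an absolute constant C such that the following holds (Weyl's inequality for quadratic exponential sums). Let a, q be coprime integers with q ≥ 2, and let t, x be real numbers with |t − a/q| ≤ 1/q². Then for every N ∈ ℕ: |∑_{n=1}^{N} e^{2πi(t n² + x n)}| ≤ C · max{ N/√q, √(N log q), √(q log q) }. -/

import Mathlib

open Complex Real
open scoped Classical

noncomputable def dnorm (x : ℝ) : ℝ := |x - round x|

lemma dnorm_nonneg (x : ℝ) : 0 ≤ dnorm x := abs_nonneg _

lemma dnorm_le_half (x : ℝ) : dnorm x ≤ 1/2 := abs_sub_round x

lemma dnorm_le_abs_sub_int (x : ℝ) (k : ℤ) : dnorm x ≤ |x - k| := by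
  rcases eq_or_ne k (round x) with rfl | hk
  · exact le_of_eq rfl
  · have h1 : (1:ℝ) ≤ |(k:ℝ) - round x| := by
      have : k - round x ≠ 0 := sub_ne_zero.2 hk
      have := Int.one_le_abs this
      calc (1:ℝ) ≤ |(k - round x : ℤ)| := by exact_mod_cast this
        _ = |(k:ℝ) - round x| := by push_cast; ring_nf
    have h2 : |(k:ℝ) - round x| ≤ |x - k| + |x - round x| := by
      have := abs_sub_abs_le_abs_sub ((k:ℝ) - round x) 0
      calc |(k:ℝ) - round x| = |(x - round x) - (x - k)| := by ring_nf
        _ ≤ |x - round x| + |x - k| := abs_sub _ _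
        _ = |x - k| + |x - round x| := by ring
    have h3 := abs_sub_round x
    unfold dnorm
    linarith

lemma dnorm_add_int (x : ℝ) (k : ℤ) : dnorm (x + k) = dnorm x := by
  unfold dnorm
  rw [round_add_intCast]
  push_cast
  ring_nf

lemma dnorm_neg (x : ℝ) : dnorm (-x) = dnorm x := by
  have h1 : dnorm (-x) ≤ dnorm x := by
    have := dnorm_le_abs_sub_int (-x) (-round x)
    refine this.trans (le_of_eq ?_)
    unfold dnorm
    push_cast
    rw [← abs_neg]
    ring_nf
  have h2 : dnorm x ≤ dnorm (-x) := by
    have := dnorm_le_abs_sub_int x (-round (-x))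
    refine this.trans (le_of_eq ?_)
    unfold dnorm; push_cast; rw [← abs_neg]; ring_nf
  linarith

lemma dnorm_lip (x y : ℝ) : dnorm x ≤ dnorm y + |x - y| := by
  have := dnorm_le_abs_sub_int x (round y)
  unfold dnorm at *
  calc dnorm x ≤ |x - round y| := this
    _ = |(y - round y) + (x - y)| := by ring_nf
    _ ≤ |y - round y| + |x - y| := abs_add_le _ _

lemma dnorm_rat (c : ℤ) (q : ℕ) (hq : 0 < q) (hc : ¬ ((q:ℤ) ∣ c)) :
    1/(q:ℝ) ≤ dnorm ((c:ℝ)/q) := by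
  have hq0 : (0:ℝ) < q := by exact_mod_cast hq
  unfold dnorm
  set r := round ((c:ℝ)/q) with hr
  have hne : c - r * q ≠ 0 := by
    intro h
    exact hc ⟨r, by linarith [sub_eq_zero.1 h]⟩
  have h1 : (1:ℝ) ≤ |(c - r*q : ℤ)| := by exact_mod_cast Int.one_le_abs hne
  have h2 : |(c:ℝ)/q - r| = |(c:ℝ) - r*q| / q := by
    rw [eq_div_iff (ne_of_gt hq0), ← abs_of_pos hq0, ← abs_mul]
    congr 1
    rw [abs_of_pos hq0, sub_mul, div_mul_cancel₀ _ (ne_of_gt hq0)]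
  rw [h2]
  rw [div_le_div_iff₀ hq0 hq0] at *
  push_cast at h1 ⊢
  nlinarith [abs_nonneg ((c:ℝ) - r*q)]

lemma dnorm_le_sin (x : ℝ) : dnorm x ≤ |Real.sin (π * x)| := by
  set r := round x
  have hε : |x - r| ≤ 1/2 := abs_sub_round x
  have h1 : Real.sin (π * x) = (-1)^r * Real.sin (π * (x - r)) := by
    rw [← Real.sin_add_int_mul_pi (π * (x - r)) r]
    ring_nf
  have h2 : |Real.sin (π * x)| = |Real.sin (π * (x - r))| := by
    rw [h1, abs_mul]
    have hone : |((-1:ℝ))^r| = 1 := by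
      rcases Int.even_or_odd r with he | ho
      · rw [he.neg_one_zpow]; simp
      · rw [Odd.neg_one_zpow ho]; simp
    rw [hone, one_mul]
  rw [h2]
  have h3 : |π * (x - r)| ≤ π / 2 := by
    rw [abs_mul, abs_of_pos Real.pi_pos]
    nlinarith [Real.pi_pos]
  have h4 := Real.mul_abs_le_abs_sin h3
  have h5 : 2 / π * |π * (x - r)| = 2 * |x - r| := by
    rw [abs_mul, abs_of_pos Real.pi_pos]
    field_simp
  rw [h5] at h4
  unfold dnorm
  calc |x - r| ≤ 2 * |x - r| := by nlinarith [abs_nonneg (x - (r:ℝ))]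
    _ ≤ _ := h4

noncomputable def wexp (θ : ℝ) : ℂ := Complex.exp (2 * (π:ℝ) * Complex.I * (θ:ℝ))

lemma wexp_add (a b : ℝ) : wexp (a + b) = wexp a * wexp b := by
  unfold wexp
  rw [← Complex.exp_add]
  push_cast
  ring_nf

lemma norm_wexp (θ : ℝ) : ‖wexp θ‖ = 1 := by
  unfold wexp
  rw [Complex.norm_exp]
  have : (2 * (π:ℝ) * Complex.I * (θ:ℝ)).re = 0 := by simp
  rw [this, Real.exp_zero]

lemma wexp_ne_zero (θ : ℝ) : wexp θ ≠ 0 := Complex.exp_ne_zero _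

lemma wexp_zpow (α : ℝ) (n : ℤ) : wexp (α * n) = (wexp α) ^ n := by
  unfold wexp
  rw [← Complex.exp_int_mul]
  congr 1
  push_cast
  ring

lemma wexp_ne_one {α : ℝ} (h : dnorm α ≠ 0) : wexp α ≠ 1 := by
  intro he
  unfold wexp at he
  rw [Complex.exp_eq_one_iff] at he
  obtain ⟨n, hn⟩ := he
  have hne : (2 * (π:ℂ) * Complex.I) ≠ 0 := by
    refine mul_ne_zero (mul_ne_zero two_ne_zero ?_) Complex.I_ne_zero
    exact_mod_cast Complex.ofReal_ne_zero.2 Real.pi_ne_zero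
  have h2 : (α : ℂ) = (n : ℂ) := by
    apply mul_left_cancel₀ hne
    rw [show (2 * (π:ℂ) * Complex.I) * α = 2 * ↑π * Complex.I * ↑α by ring, hn]
    ring
  have h3 : α = (n : ℝ) := by exact_mod_cast h2
  apply h
  rw [h3]
  have := dnorm_add_int 0 n
  simpa [dnorm] using this.symm ▸ (by simpa using dnorm_add_int 0 n)

lemma norm_wexp_sub_one (α : ℝ) : 2 * dnorm α ≤ ‖wexp α - 1‖ := by
  have key : ‖wexp α - 1‖ = 2 * |Real.sin (π * α)| := by
    unfold wexp
    have h1 : (2 * (π:ℂ) * Complex.I * (α:ℂ)) = ((2*π*α : ℝ) : ℂ) * Complex.I := by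
      push_cast; ring
    rw [h1, Complex.exp_mul_I]
    set θ := 2*π*α with hθ
    have hre : (Complex.cos θ + Complex.sin θ * Complex.I - 1) =
        Complex.ofReal (Real.cos θ - 1) + Complex.ofReal (Real.sin θ) * Complex.I := by
      rw [← Complex.ofReal_cos, ← Complex.ofReal_sin]
      push_cast
      ring
    rw [hre]
    rw [Complex.norm_def, Complex.normSq_add_mul_I]
    have h2 : (Real.cos θ - 1)^2 + (Real.sin θ)^2 = 2 - 2 * Real.cos θ := by
      nlinarith [Real.sin_sq_add_cos_sq θ]
    rw [h2]
    have h3 : |Real.sin (θ/2)| = Real.sqrt ((1 - Real.cos θ)/2) := Real.abs_sin_half θ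
    have h4 : θ / 2 = π * α := by rw [hθ]; ring
    rw [← h4]
    have h5 : 2 - 2*Real.cos θ = (2 * |Real.sin (θ/2)|)^2 := by
      rw [h3, mul_pow, Real.sq_sqrt (by nlinarith [Real.cos_le_one θ])]
      ring
    rw [h5, Real.sqrt_sq (by positivity)]
  rw [key]
  have := dnorm_le_sin α
  linarith

lemma norm_sum_wexp_le_card {s : Finset ℤ} (g : ℤ → ℝ) :
    ‖∑ n ∈ s, wexp (g n)‖ ≤ s.card := by
  calc ‖∑ n ∈ s, wexp (g n)‖ ≤ ∑ n ∈ s, ‖wexp (g n)‖ := norm_sum_le _ _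
    _ = ∑ _n ∈ s, (1:ℝ) := Finset.sum_congr rfl (fun n _ => norm_wexp (g n))
    _ = s.card := by simp

lemma geo (α c : ℝ) (A B : ℤ) (h : dnorm α ≠ 0) :
    ‖∑ n ∈ Finset.Icc A B, wexp (α * n + c)‖ ≤ 1 / dnorm α := by
  have hd : 0 < dnorm α := lt_of_le_of_ne (dnorm_nonneg α) (Ne.symm h)
  rcases le_or_gt A B with hAB | hAB
  swap
  · rw [Finset.Icc_eq_empty (not_le.2 hAB)]
    simp
    positivity
  set z := wexp α with hz
  have hz1 : z ≠ 1 := wexp_ne_one h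
  have hsplit : ∀ n : ℤ, wexp (α * n + c) = wexp c * z ^ n := by
    intro n
    rw [wexp_add, wexp_zpow, mul_comm]
  rw [Finset.sum_congr rfl (fun n _ => hsplit n)]
  rw [← Finset.mul_sum, norm_mul, norm_wexp, one_mul]
  set L : ℕ := (B - A + 1).toNat with hL
  have hre : ∑ n ∈ Finset.Icc A B, z ^ n = z ^ A * ∑ j ∈ Finset.range L, z ^ j := by
    rw [Finset.mul_sum]
    refine Finset.sum_nbij' (fun n => (n - A).toNat) (fun j => A + (j:ℤ)) ?_ ?_ ?_ ?_ ?_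
    · intro n hn
      rw [Finset.mem_Icc] at hn
      rw [Finset.mem_range, hL]
      omega
    · intro j hj
      rw [Finset.mem_range, hL] at hj
      rw [Finset.mem_Icc]
      omega
    · intro n hn; rw [Finset.mem_Icc] at hn; omega
    · intro j hj; simp
    · intro n hn
      rw [Finset.mem_Icc] at hn
      rw [← zpow_natCast z ((n - A).toNat), ← zpow_add₀ (wexp_ne_zero α)]
      congr 1
      omega
  rw [hre, norm_mul]
  have hnz : ‖z ^ A‖ = 1 := by
    rw [norm_zpow, norm_wexp, one_zpow]
  rw [hnz, one_mul]
  rw [geom_sum_eq hz1]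
  rw [norm_div]
  have hnum : ‖z ^ L - 1‖ ≤ 2 := by
    calc ‖z ^ L - 1‖ ≤ ‖z ^ L‖ + 1 := by
          simpa using norm_sub_le (z ^ L) 1
      _ = 2 := by rw [norm_pow, norm_wexp]; norm_num
  have hden : 2 * dnorm α ≤ ‖z - 1‖ := norm_wexp_sub_one α
  have hden0 : 0 < ‖z - 1‖ := lt_of_lt_of_le (by linarith) hden
  calc ‖z ^ L - 1‖ / ‖z - 1‖ ≤ 2 / (2 * dnorm α) := by
        apply div_le_div₀ (by norm_num) hnum (by linarith) hden
    _ = 1 / dnorm α := by field_simp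

lemma dnorm_ge_min_fract (x : ℝ) : min (Int.fract x) (1 - Int.fract x) ≤ dnorm x := by
  rw [show dnorm x = |x - round x| from rfl, abs_sub_round_eq_min]

/-- Harmonic sum bound over integer interval. -/
lemma harm_sum (M : ℕ) : ∑ u ∈ Finset.Icc (1:ℤ) (M:ℤ), (1:ℝ)/(u:ℝ) ≤ 1 + Real.log M := by
  induction M with
  | zero => simp
  | succ M ih =>
    have hins : Finset.Icc (1:ℤ) ((M:ℤ)+1) = insert ((M:ℤ)+1) (Finset.Icc 1 (M:ℤ)) := by
      ext k
      simp only [Finset.mem_Icc, Finset.mem_insert]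
      omega
    rcases Nat.eq_zero_or_pos M with rfl | hM
    · simp
    push_cast
    rw [hins, Finset.sum_insert (by simp)]
    have hlog : (1:ℝ)/((M:ℝ)+1) ≤ Real.log ((M:ℝ)+1) - Real.log M := by
      have hM0 : (0:ℝ) < M := by exact_mod_cast hM
      have h1 : Real.log ((M:ℝ)/((M:ℝ)+1)) ≤ (M:ℝ)/((M:ℝ)+1) - 1 :=
        Real.log_le_sub_one_of_pos (by positivity)
      rw [Real.log_div (by positivity) (by positivity)] at h1
      have h2 : (M:ℝ)/((M:ℝ)+1) - 1 = -(1/((M:ℝ)+1)) := by field_simp; ring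
      linarith [h1.trans_eq h2]
    push_cast at ih ⊢
    linarith

noncomputable def fbd (q N : ℕ) : ℤ → ℝ := fun u => if u ≤ 1 then (N:ℝ) else (q:ℝ)/((u:ℝ)-1)

lemma fbd_nonneg (q N : ℕ) (u : ℤ) : 0 ≤ fbd q N u := by
  unfold fbd
  split
  · positivity
  · rename_i h
    have : (2:ℝ) ≤ (u:ℝ) := by exact_mod_cast (by omega : (2:ℤ) ≤ u)
    have : (0:ℝ) < (u:ℝ) - 1 := by linarith
    positivity

set_option maxHeartbeats 1000000 in
lemma block_lemma (a : ℤ) (q : ℕ) (hq : 2 ≤ q) (hco : Int.gcd a q = 1)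
    (t γ : ℝ) (N : ℕ) (E : ℤ → ℝ)
    (hE0 : ∀ k, 0 ≤ E k) (hEN : ∀ k, E k ≤ N)
    (hEd : ∀ k : ℤ, dnorm (t*(k:ℝ)) ≠ 0 → E k ≤ 1 / dnorm (t*(k:ℝ)))
    (m : ℤ)
    (hpert : ∀ k ∈ Finset.Ioc m (m + (q:ℤ)), |t*(k:ℝ) - ((a*k : ℤ):ℝ)/q - γ| ≤ 1/q) :
    ∑ k ∈ Finset.Ioc m (m + (q:ℤ)), E k ≤ 4*(N:ℝ) + 2*(q:ℝ)*(1 + Real.log q) := by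
  have hq0 : (0:ℝ) < q := by positivity
  set p : ℤ → ℝ := fun k => Int.fract (γ + ((a*k : ℤ):ℝ)/q) with hp
  set slot : ℤ → ℤ := fun k => ⌊p k * q⌋ with hslot
  -- (c1) range of slot
  have c1 : ∀ k, 0 ≤ slot k ∧ slot k ≤ (q:ℤ) - 1 := by
    intro k
    constructor
    · apply Int.floor_nonneg.2
      exact mul_nonneg (Int.fract_nonneg _) hq0.le
    · have : slot k < (q:ℤ) := by
        apply Int.floor_lt.2
        push_cast
        calc p k * q < 1 * q := by
              apply mul_lt_mul_of_pos_right (Int.fract_lt_one _) hq0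
          _ = q := one_mul _
      omega
  -- distinct residues: injectivity of slot on the block
  have c2 : ∀ x ∈ Finset.Ioc m (m + (q:ℤ)), ∀ y ∈ Finset.Ioc m (m + (q:ℤ)),
      slot x = slot y → x = y := by
    intro k hk k' hk' heq
    by_contra hne
    rw [Finset.mem_Ioc] at hk hk'
    -- the rational points are 1/q-separated
    have hdist : dnorm (p k - p k') = dnorm (((a*(k - k') : ℤ):ℝ)/q) := by
      have : p k - p k' = ((a*(k - k') : ℤ):ℝ)/q +
          ((⌊γ + ((a*k' : ℤ):ℝ)/q⌋ - ⌊γ + ((a*k : ℤ):ℝ)/q⌋ : ℤ) : ℝ) := by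
        simp only [hp, Int.fract]
        push_cast
        field_simp
        ring
      rw [this, dnorm_add_int]
    have hndvd : ¬ ((q:ℤ) ∣ a*(k - k')) := by
      intro hdvd
      have h1 : (q:ℤ) ∣ (k - k') * a := by rwa [mul_comm] at hdvd
      have h2 : (q:ℤ) ∣ (k - k') := by
        have hcop : Int.gcd (q:ℤ) a = 1 := by rwa [Int.gcd_comm] at hco
        exact Int.dvd_of_dvd_mul_left_of_gcd_one h1 hcop
      have h3 : (q:ℤ) ≤ |k - k'| := Int.le_of_dvd (abs_pos.2 (sub_ne_zero.2 hne)) ((dvd_abs _ _).2 h2)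
      have : |k - k'| < q := by rw [abs_lt]; omega
      omega
    have hsep : 1/(q:ℝ) ≤ dnorm (p k - p k') := by
      rw [hdist]; exact dnorm_rat _ q (by omega) hndvd
    have hclose : |p k - p k'| < 1/q := by
      have h1 := Int.floor_le (p k * q)
      have h2 := Int.lt_floor_add_one (p k * q)
      have h3 := Int.floor_le (p k' * q)
      have h4 := Int.lt_floor_add_one (p k' * q)
      rw [hslot] at heq
      simp only at heq
      rw [heq] at h1 h2
      have hinv : 1/(q:ℝ)*q = 1 := by field_simp
      rw [abs_lt]
      constructor
      · nlinarith
      · nlinarith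
    have := dnorm_le_abs_sub_int (p k - p k') 0
    simp only [Int.cast_zero, sub_zero] at this
    linarith
  -- (c3) pointwise bound
  have c3 : ∀ k ∈ Finset.Ioc m (m + (q:ℤ)), E k ≤ fbd q N (slot k) + fbd q N ((q:ℤ)-1-slot k) := by
    intro k hk
    obtain ⟨hv0, hv1⟩ := c1 k
    set v := slot k with hv
    have hp1 : (v:ℝ)/q ≤ p k := by
      rw [div_le_iff₀ hq0]
      exact Int.floor_le (p k * q)
    have hp2 : (((q:ℤ)-1-v : ℤ):ℝ)/q ≤ 1 - p k := by
      have h2 := Int.lt_floor_add_one (p k * q)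
      rw [div_le_iff₀ hq0]
      push_cast
      rw [← hv] at *
      nlinarith [Int.lt_floor_add_one (p k * q)]
    have hdn1 : min ((v:ℝ)/q) ((((q:ℤ)-1-v : ℤ):ℝ)/q) ≤ dnorm (γ + ((a*k : ℤ):ℝ)/q) := by
      have := dnorm_ge_min_fract (γ + ((a*k : ℤ):ℝ)/q)
      have hmin : min ((v:ℝ)/q) ((((q:ℤ)-1-v : ℤ):ℝ)/q) ≤
          min (Int.fract (γ + ((a*k : ℤ):ℝ)/q)) (1 - Int.fract (γ + ((a*k : ℤ):ℝ)/q)) := by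
        apply min_le_min hp1 hp2
      linarith
    have hdn2 : dnorm (γ + ((a*k : ℤ):ℝ)/q) - 1/q ≤ dnorm (t*(k:ℝ)) := by
      have hl := dnorm_lip (γ + ((a*k : ℤ):ℝ)/q) (t*k)
      have habs : |γ + ((a*k : ℤ):ℝ)/q - t*k| ≤ 1/q := by
        have := hpert k hk
        rw [abs_sub_comm]
        convert this using 2
        ring
      linarith
    set w : ℤ := min v ((q:ℤ)-1-v) with hw
    have hwmin : ((w:ℤ):ℝ)/q ≤ dnorm (γ + ((a*k : ℤ):ℝ)/q) := by
      refine le_trans (le_min ?_ ?_) hdn1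
      · gcongr
        exact_mod_cast min_le_left v ((q:ℤ)-1-v)
      · gcongr
        exact_mod_cast min_le_right v ((q:ℤ)-1-v)
    rcases le_or_gt w 1 with hwle | hwgt
    · -- small w: use trivial bound N
      rcases min_choice v ((q:ℤ)-1-v) with hc | hc
      · have hfv : fbd q N v = N := by
          unfold fbd; rw [if_pos]; omega
        rw [hfv]
        have := fbd_nonneg q N ((q:ℤ)-1-v)
        linarith [hEN k]
      · have hfv : fbd q N ((q:ℤ)-1-v) = N := by
          unfold fbd; rw [if_pos]; omega
        rw [hfv]
        have := fbd_nonneg q N v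
        linarith [hEN k]
    · -- w ≥ 2
      have hwd : ((w:ℝ) - 1)/q ≤ dnorm (t*(k:ℝ)) := by
        have : ((w:ℝ) - 1)/q = (w:ℝ)/q - 1/q := by ring
        linarith [this ▸ (by linarith : ((w:ℝ))/q - 1/q ≤ dnorm (t*(k:ℝ)))]
      have hw2 : (2:ℝ) ≤ (w:ℝ) := by exact_mod_cast hwgt
      have hdpos : 0 < dnorm (t*(k:ℝ)) := by
        apply lt_of_lt_of_le _ hwd
        apply div_pos (by linarith) hq0
      have hEk : E k ≤ 1 / dnorm (t*(k:ℝ)) := hEd k (ne_of_gt hdpos)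
      have hkey : 1 / dnorm (t*(k:ℝ)) ≤ (q:ℝ)/((w:ℝ)-1) := by
        rw [div_le_div_iff₀ hdpos (by linarith)]
        calc 1 * ((w:ℝ)-1) = (((w:ℝ)-1)/q) * q := by field_simp
          _ ≤ dnorm (t*(k:ℝ)) * q := by
              apply mul_le_mul_of_nonneg_right hwd hq0.le
          _ = (q:ℝ) * dnorm (t*(k:ℝ)) := by ring
      have hfw : fbd q N w = (q:ℝ)/((w:ℝ)-1) := by
        unfold fbd; rw [if_neg]; omega
      rcases min_choice v ((q:ℤ)-1-v) with hc | hc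
      · have : fbd q N v = (q:ℝ)/((w:ℝ)-1) := by rw [← hfw, hw, hc]
        rw [this]
        have := fbd_nonneg q N ((q:ℤ)-1-v)
        linarith
      · have : fbd q N ((q:ℤ)-1-v) = (q:ℝ)/((w:ℝ)-1) := by rw [← hfw, hw, hc]
        rw [this]
        have := fbd_nonneg q N v
        linarith
  -- (c4) sum the bound via slot injectivity
  have c4 : ∑ k ∈ Finset.Ioc m (m + (q:ℤ)), E k ≤
      ∑ v ∈ Finset.Icc (0:ℤ) ((q:ℤ)-1), (fbd q N v + fbd q N ((q:ℤ)-1-v)) := by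
    calc ∑ k ∈ Finset.Ioc m (m + (q:ℤ)), E k
        ≤ ∑ k ∈ Finset.Ioc m (m + (q:ℤ)), (fbd q N (slot k) + fbd q N ((q:ℤ)-1-slot k)) :=
          Finset.sum_le_sum c3
      _ = ∑ v ∈ (Finset.Ioc m (m + (q:ℤ))).image slot,
            (fbd q N v + fbd q N ((q:ℤ)-1-v)) := (Finset.sum_image (f := fun v => fbd q N v + fbd q N ((q:ℤ)-1-v)) c2).symm
      _ ≤ ∑ v ∈ Finset.Icc (0:ℤ) ((q:ℤ)-1), (fbd q N v + fbd q N ((q:ℤ)-1-v)) := by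
          apply Finset.sum_le_sum_of_subset_of_nonneg
          · intro v hv
            rw [Finset.mem_image] at hv
            obtain ⟨k, _, rfl⟩ := hv
            rw [Finset.mem_Icc]
            exact c1 k
          · intro v _ _
            have := fbd_nonneg q N v
            have := fbd_nonneg q N ((q:ℤ)-1-v)
            linarith
  -- (c5) evaluate the model sum
  have c5refl : ∑ v ∈ Finset.Icc (0:ℤ) ((q:ℤ)-1), fbd q N ((q:ℤ)-1-v) =
      ∑ v ∈ Finset.Icc (0:ℤ) ((q:ℤ)-1), fbd q N v := by
    refine Finset.sum_nbij' (fun v => (q:ℤ)-1-v) (fun v => (q:ℤ)-1-v) ?_ ?_ ?_ ?_ ?_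
    · intro v hv; simp only [Finset.mem_Icc] at hv ⊢; omega
    · intro v hv; simp only [Finset.mem_Icc] at hv ⊢; omega
    · intro v hv; omega
    · intro v hv; omega
    · intro v hv; rfl
  have c5 : ∑ v ∈ Finset.Icc (0:ℤ) ((q:ℤ)-1), fbd q N v ≤ 2*(N:ℝ) + (q:ℝ)*(1 + Real.log q) := by
    have hsplit : Finset.Icc (0:ℤ) ((q:ℤ)-1) = Finset.Icc 0 1 ∪ Finset.Icc 2 ((q:ℤ)-1) := by
      ext v; simp only [Finset.mem_Icc, Finset.mem_union]; omega
    have hdisj : Disjoint (Finset.Icc (0:ℤ) 1) (Finset.Icc 2 ((q:ℤ)-1)) := by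
      rw [Finset.disjoint_left]
      intro v hv hv'
      rw [Finset.mem_Icc] at *
      omega
    rw [hsplit, Finset.sum_union hdisj]
    have h01 : ∑ v ∈ Finset.Icc (0:ℤ) 1, fbd q N v = 2*(N:ℝ) := by
      rw [show Finset.Icc (0:ℤ) 1 = {0, 1} by ext v; simp [Finset.mem_Icc]; omega]
      rw [Finset.sum_insert (by simp), Finset.sum_singleton]
      unfold fbd
      rw [if_pos (by omega), if_pos (by omega)]
      ring
    have h2q : ∑ v ∈ Finset.Icc (2:ℤ) ((q:ℤ)-1), fbd q N v ≤ (q:ℝ)*(1 + Real.log q) := by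
      have hre : ∑ v ∈ Finset.Icc (2:ℤ) ((q:ℤ)-1), fbd q N v =
          ∑ u ∈ Finset.Icc (1:ℤ) ((q:ℤ)-2), (q:ℝ) * (1/(u:ℝ)) := by
        refine Finset.sum_nbij' (fun v => v - 1) (fun u => u + 1) ?_ ?_ ?_ ?_ ?_
        · intro v hv; simp only [Finset.mem_Icc] at hv ⊢; omega
        · intro u hu; simp only [Finset.mem_Icc] at hu ⊢; omega
        · intro v hv; omega
        · intro u hu; omega
        · intro v hv
          rw [Finset.mem_Icc] at hv
          unfold fbd
          rw [if_neg (by omega)]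
          push_cast
          rw [div_eq_mul_one_div]
      rw [hre, ← Finset.mul_sum]
      have hharm : ∑ u ∈ Finset.Icc (1:ℤ) ((q:ℤ)-2), (1:ℝ)/(u:ℝ) ≤ 1 + Real.log (q-2:ℕ) := by
        have := harm_sum (q-2)
        have hc : (((q-2:ℕ)):ℤ) = (q:ℤ)-2 := by omega
        rw [hc] at this
        exact this
      have hlog : Real.log ((q-2:ℕ):ℝ) ≤ Real.log q := by
        rcases Nat.eq_zero_or_pos (q-2) with h0 | hpos
        · rw [h0]
          simp only [Nat.cast_zero, Real.log_zero]
          exact Real.log_nonneg (by exact_mod_cast (by omega : 1 ≤ q))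
        · apply Real.log_le_log (by exact_mod_cast hpos)
          exact_mod_cast (by omega : q - 2 ≤ q)
      calc (q:ℝ) * ∑ u ∈ Finset.Icc (1:ℤ) ((q:ℤ)-2), (1:ℝ)/(u:ℝ)
          ≤ (q:ℝ) * (1 + Real.log (q-2:ℕ)) := by
            apply mul_le_mul_of_nonneg_left hharm hq0.le
        _ ≤ (q:ℝ) * (1 + Real.log q) := by
            apply mul_le_mul_of_nonneg_left _ hq0.le
            linarith
    linarith
  calc ∑ k ∈ Finset.Ioc m (m + (q:ℤ)), E k
      ≤ ∑ v ∈ Finset.Icc (0:ℤ) ((q:ℤ)-1), (fbd q N v + fbd q N ((q:ℤ)-1-v)) := c4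
    _ = 2 * ∑ v ∈ Finset.Icc (0:ℤ) ((q:ℤ)-1), fbd q N v := by
        rw [Finset.sum_add_distrib, c5refl]; ring
    _ ≤ 2 * (2*(N:ℝ) + (q:ℝ)*(1 + Real.log q)) := by linarith
    _ = 4*(N:ℝ) + 2*(q:ℝ)*(1 + Real.log q) := by ring

set_option maxHeartbeats 1000000 in
lemma cover_lemma (a : ℤ) (q : ℕ) (hq : 2 ≤ q) (hco : Int.gcd a q = 1) (t : ℝ)
    (ht : |t - (a:ℝ)/q| ≤ 1/(q:ℝ)^2) (N K : ℕ) (E : ℤ → ℝ)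
    (hE0 : ∀ k, 0 ≤ E k) (hEN : ∀ k, E k ≤ N)
    (hEd : ∀ k : ℤ, dnorm (t*(k:ℝ)) ≠ 0 → E k ≤ 1 / dnorm (t*(k:ℝ))) :
    ∑ k ∈ Finset.Icc (1:ℤ) (K:ℤ), E k ≤
      ((K/q + 1 : ℕ):ℝ) * (4*(N:ℝ) + 2*(q:ℝ)*(1 + Real.log q)) := by
  set J := K/q + 1 with hJ
  have hq0 : 0 < q := by omega
  have hq0' : (0:ℝ) < q := by positivity
  have hKJ : K < J * q := by
    rw [hJ]
    have h1 := Nat.div_add_mod K q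
    have h2 := Nat.mod_lt K hq0
    nlinarith
  have hsub : Finset.Icc (1:ℤ) (K:ℤ) ⊆ Finset.Ioc (0:ℤ) ((J*q : ℕ):ℤ) := by
    intro k hk
    simp only [Finset.mem_Icc] at hk
    simp only [Finset.mem_Ioc]
    have : (K:ℤ) < ((J*q : ℕ):ℤ) := by exact_mod_cast hKJ
    omega
  have hcover : ∑ k ∈ Finset.Icc (1:ℤ) (K:ℤ), E k ≤ ∑ k ∈ Finset.Ioc (0:ℤ) ((J*q:ℕ):ℤ), E k :=
    Finset.sum_le_sum_of_subset_of_nonneg hsub (fun k _ _ => hE0 k)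
  have hsplit : ∀ n : ℕ, ∑ k ∈ Finset.Ioc (0:ℤ) ((n*q:ℕ):ℤ), E k =
      ∑ j ∈ Finset.range n, ∑ k ∈ Finset.Ioc ((j*q:ℕ):ℤ) (((j*q:ℕ):ℤ) + (q:ℤ)), E k := by
    intro n
    induction n with
    | zero => simp
    | succ n ih =>
      rw [Finset.sum_range_succ, ← ih]
      have hu : Finset.Ioc (0:ℤ) ((n*q:ℕ):ℤ) ∪ Finset.Ioc ((n*q:ℕ):ℤ) (((n*q:ℕ):ℤ) + (q:ℤ)) =
          Finset.Ioc (0:ℤ) (((n+1)*q:ℕ):ℤ) := by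
        rw [Finset.Ioc_union_Ioc_eq_Ioc (by positivity) (by push_cast; nlinarith)]
        congr 1
        push_cast
        ring
      have hdisj : Disjoint (Finset.Ioc (0:ℤ) ((n*q:ℕ):ℤ))
          (Finset.Ioc ((n*q:ℕ):ℤ) (((n*q:ℕ):ℤ) + (q:ℤ))) := by
        rw [Finset.disjoint_left]
        intro k hk hk'
        simp only [Finset.mem_Ioc] at hk hk'
        omega
      rw [← hu, Finset.sum_union hdisj]
  have hblock : ∀ j : ℕ, ∑ k ∈ Finset.Ioc ((j*q:ℕ):ℤ) (((j*q:ℕ):ℤ) + (q:ℤ)), E k ≤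
      4*(N:ℝ) + 2*(q:ℝ)*(1 + Real.log q) := by
    intro j
    apply block_lemma a q hq hco t ((t - (a:ℝ)/q) * ((j*q:ℕ):ℝ)) N E hE0 hEN hEd
    intro k hk
    simp only [Finset.mem_Ioc] at hk
    have hkm : |(k:ℝ) - ((j*q:ℕ):ℝ)| ≤ q := by
      rw [abs_le]
      constructor
      · have : ((j*q:ℕ):ℤ) < k := hk.1
        have : ((j*q:ℕ):ℝ) < (k:ℝ) := by exact_mod_cast this
        linarith
      · have : (k:ℤ) ≤ ((j*q:ℕ):ℤ) + q := hk.2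
        have : (k:ℝ) ≤ ((j*q:ℕ):ℝ) + q := by exact_mod_cast this
        linarith
    have heq : t*(k:ℝ) - ((a*k : ℤ):ℝ)/q - (t - (a:ℝ)/q) * ((j*q:ℕ):ℝ) =
        (t - (a:ℝ)/q) * ((k:ℝ) - ((j*q:ℕ):ℝ)) := by
      push_cast
      field_simp
    rw [heq, abs_mul]
    calc |t - (a:ℝ)/q| * |(k:ℝ) - ((j*q:ℕ):ℝ)| ≤ (1/(q:ℝ)^2) * q := by
          apply mul_le_mul ht hkm (abs_nonneg _) (by positivity)
      _ = 1/q := by field_simp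
  calc ∑ k ∈ Finset.Icc (1:ℤ) (K:ℤ), E k ≤ ∑ k ∈ Finset.Ioc (0:ℤ) ((J*q:ℕ):ℤ), E k := hcover
    _ = ∑ j ∈ Finset.range J, ∑ k ∈ Finset.Ioc ((j*q:ℕ):ℤ) (((j*q:ℕ):ℤ) + (q:ℤ)), E k :=
        hsplit J
    _ ≤ ∑ j ∈ Finset.range J, (4*(N:ℝ) + 2*(q:ℝ)*(1 + Real.log q)) :=
        Finset.sum_le_sum (fun j _ => hblock j)
    _ = (J:ℝ) * (4*(N:ℝ) + 2*(q:ℝ)*(1 + Real.log q)) := by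
        rw [Finset.sum_const, Finset.card_range, nsmul_eq_mul]

noncomputable def Emin (t : ℝ) (N : ℕ) (k : ℤ) : ℝ :=
  if dnorm (t*(k:ℝ)) = 0 then (N:ℝ) else min (N:ℝ) (1/dnorm (t*(k:ℝ)))

lemma Emin_nonneg (t : ℝ) (N : ℕ) (k : ℤ) : 0 ≤ Emin t N k := by
  unfold Emin
  split
  · positivity
  · rename_i h
    have : 0 < dnorm (t*(k:ℝ)) := lt_of_le_of_ne (dnorm_nonneg _) (Ne.symm h)
    have : (0:ℝ) ≤ 1/dnorm (t*(k:ℝ)) := by positivity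
    positivity

lemma Emin_le_N (t : ℝ) (N : ℕ) (k : ℤ) : Emin t N k ≤ N := by
  unfold Emin
  split
  · exact le_refl _
  · exact min_le_left _ _

lemma Emin_le_inv (t : ℝ) (N : ℕ) (k : ℤ) (h : dnorm (t*(k:ℝ)) ≠ 0) :
    Emin t N k ≤ 1/dnorm (t*(k:ℝ)) := by
  unfold Emin
  rw [if_neg h]
  exact min_le_right _ _

lemma conj_wexp (θ : ℝ) : (starRingEnd ℂ) (wexp θ) = wexp (-θ) := by
  unfold wexp
  rw [← Complex.exp_conj]
  congr 1
  simp only [map_mul, Complex.conj_I, Complex.conj_ofReal, map_ofNat, Complex.ofReal_neg]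
  ring

set_option maxHeartbeats 1000000 in
lemma weyl_diff (t x : ℝ) (N : ℕ) (hN : 1 ≤ N) :
    ‖∑ n ∈ Finset.Icc (1:ℤ) (N:ℤ), wexp (t*(n:ℝ)^2 + x*(n:ℝ))‖^2 ≤
      (N:ℝ) + 2 * ∑ k ∈ Finset.Icc (1:ℤ) ((2*N : ℕ):ℤ), Emin t N k := by
  set f : ℤ → ℝ := fun n => t*(n:ℝ)^2 + x*(n:ℝ) with hf
  set I : Finset ℤ := Finset.Icc (1:ℤ) (N:ℤ) with hI
  set S : ℂ := ∑ n ∈ I, wexp (f n) with hS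
  -- step 1: |S|² as a double sum
  have h1 : (‖S‖:ℝ)^2 = ‖∑ p ∈ I ×ˢ I, wexp (f p.1 - f p.2)‖ := by
    have hc : S * (starRingEnd ℂ) S = ∑ p ∈ I ×ˢ I, wexp (f p.1 - f p.2) := by
      rw [hS, map_sum, Finset.sum_mul_sum]
      rw [← Finset.sum_product']
      apply Finset.sum_congr rfl
      intro p _
      rw [conj_wexp, ← wexp_add, sub_eq_add_neg]
    have habs : ‖S * (starRingEnd ℂ) S‖ = ‖S‖^2 := by
      rw [norm_mul, RCLike.norm_conj]
      ring
    rw [← habs, hc]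
  -- step 2: fiberwise over h = p.1 - p.2
  have hmaps : ∀ p ∈ I ×ˢ I, p.1 - p.2 ∈ Finset.Icc (-(N:ℤ)) (N:ℤ) := by
    intro p hp
    rw [Finset.mem_product, hI, Finset.mem_Icc, Finset.mem_Icc] at hp
    rw [Finset.mem_Icc]
    omega
  have h2 : ∑ p ∈ I ×ˢ I, wexp (f p.1 - f p.2) =
      ∑ h ∈ Finset.Icc (-(N:ℤ)) (N:ℤ), ∑ p ∈ (I ×ˢ I).filter (fun p => p.1 - p.2 = h),
        wexp (f p.1 - f p.2) :=
    (Finset.sum_fiberwise_of_maps_to hmaps _).symm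
  -- step 3: rewrite each fiber as a 1-d geometric-type sum
  have h3 : ∀ h : ℤ, ∑ p ∈ (I ×ˢ I).filter (fun p => p.1 - p.2 = h), wexp (f p.1 - f p.2) =
      ∑ n ∈ Finset.Icc (max 1 (1+h)) (min (N:ℤ) ((N:ℤ)+h)),
        wexp ((2*t*(h:ℝ))*(n:ℝ) + (x*(h:ℝ) - t*(h:ℝ)^2)) := by
    intro h
    refine Finset.sum_nbij' (fun p => p.1) (fun n => (n, n - h)) ?_ ?_ ?_ ?_ ?_
    · intro p hp
      simp only [Finset.mem_filter, Finset.mem_product, hI, Finset.mem_Icc] at hp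
      simp only [Finset.mem_Icc]
      omega
    · intro n hn
      simp only [Finset.mem_Icc, le_max_iff, min_le_iff] at hn
      simp only [Finset.mem_filter, Finset.mem_product, hI, Finset.mem_Icc]
      have h1 := hn.1
      have h2 := hn.2
      simp only [max_le_iff, le_min_iff] at h1 h2
      refine ⟨⟨⟨by omega, by omega⟩, ⟨by omega, by omega⟩⟩, by ring⟩
    · intro p hp
      simp only [Finset.mem_filter] at hp
      have := hp.2
      rw [← this]
      simp
    · intro n hn
      rfl
    · intro p hp
      simp only [Finset.mem_filter, Finset.mem_product, hI, Finset.mem_Icc] at hp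
      have hp2 : p.2 = p.1 - h := by omega
      congr 1
      rw [hf, hp2]
      push_cast
      ring
  -- step 4: bound each fiber
  have h4 : ∀ h ∈ Finset.Icc (-(N:ℤ)) (N:ℤ),
      ‖∑ n ∈ Finset.Icc (max 1 (1+h)) (min (N:ℤ) ((N:ℤ)+h)),
        wexp ((2*t*(h:ℝ))*(n:ℝ) + (x*(h:ℝ) - t*(h:ℝ)^2))‖ ≤
      (if h = 0 then (N:ℝ) else Emin t N (2*|h|)) := by
    intro h _
    set A := max 1 (1+h) with hA
    set B := min (N:ℤ) ((N:ℤ)+h) with hB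
    have hcard : ‖∑ n ∈ Finset.Icc A B,
        wexp ((2*t*(h:ℝ))*(n:ℝ) + (x*(h:ℝ) - t*(h:ℝ)^2))‖ ≤ (N:ℝ) := by
      refine le_trans (norm_sum_wexp_le_card _) ?_
      have : (Finset.Icc A B).card = (B + 1 - A).toNat := Int.card_Icc A B
      rw [this]
      have : (B + 1 - A).toNat ≤ N := by rw [hA, hB]; omega
      exact_mod_cast this
    by_cases h0 : h = 0
    · rw [if_pos h0]; exact hcard
    · rw [if_neg h0]
      have hang : dnorm (t*((2*|h| : ℤ):ℝ)) = dnorm (2*t*(h:ℝ)) := by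
        rcases abs_cases h with ⟨he, _⟩ | ⟨he, _⟩
        · rw [he]; push_cast; ring_nf
        · rw [he]
          rw [show t*(((2*(-h) : ℤ)):ℝ) = -(2*t*(h:ℝ)) by push_cast; ring]
          exact dnorm_neg _
      unfold Emin
      by_cases hd : dnorm (t*((2*|h| : ℤ):ℝ)) = 0
      · rw [if_pos hd]; exact hcard
      · rw [if_neg hd]
        refine le_min hcard ?_
        rw [hang] at hd ⊢
        exact geo _ _ A B hd
  -- step 5: sum the fiber bounds
  have h5 : ∑ h ∈ Finset.Icc (-(N:ℤ)) (N:ℤ), (if h = 0 then (N:ℝ) else Emin t N (2*|h|)) =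
      (N:ℝ) + 2 * ∑ h ∈ Finset.Icc (1:ℤ) (N:ℤ), Emin t N (2*h) := by
    have hsplit : Finset.Icc (-(N:ℤ)) (N:ℤ) =
        (Finset.Icc (-(N:ℤ)) (-1)) ∪ (insert 0 (Finset.Icc (1:ℤ) (N:ℤ))) := by
      ext k
      simp only [Finset.mem_Icc, Finset.mem_union, Finset.mem_insert]
      omega
    have hdisj : Disjoint (Finset.Icc (-(N:ℤ)) (-1)) (insert 0 (Finset.Icc (1:ℤ) (N:ℤ))) := by
      rw [Finset.disjoint_left]
      intro k hk hk'
      simp only [Finset.mem_Icc] at hk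
      simp only [Finset.mem_insert, Finset.mem_Icc] at hk'
      omega
    rw [hsplit, Finset.sum_union hdisj, Finset.sum_insert (by simp)]
    have hneg : ∑ h ∈ Finset.Icc (-(N:ℤ)) (-1), (if h = 0 then (N:ℝ) else Emin t N (2*|h|)) =
        ∑ h ∈ Finset.Icc (1:ℤ) (N:ℤ), Emin t N (2*h) := by
      refine Finset.sum_nbij' (fun h => -h) (fun h => -h) ?_ ?_ ?_ ?_ ?_
      · intro h hh; simp only [Finset.mem_Icc] at hh ⊢; omega
      · intro h hh; simp only [Finset.mem_Icc] at hh ⊢; omega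
      · intro h hh; omega
      · intro h hh; omega
      · intro h hh
        simp only [Finset.mem_Icc] at hh
        rw [if_neg (by omega)]
        rw [abs_of_nonpos (by omega : h ≤ 0)]
    have hpos : ∑ h ∈ Finset.Icc (1:ℤ) (N:ℤ), (if h = 0 then (N:ℝ) else Emin t N (2*|h|)) =
        ∑ h ∈ Finset.Icc (1:ℤ) (N:ℤ), Emin t N (2*h) := by
      apply Finset.sum_congr rfl
      intro h hh
      simp only [Finset.mem_Icc] at hh
      rw [if_neg (by omega)]
      rw [abs_of_nonneg (by omega : (0:ℤ) ≤ h)]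
    rw [hneg, if_pos rfl, hpos]
    ring
  -- step 6: compare with the Icc 1 2N sum
  have h6 : ∑ h ∈ Finset.Icc (1:ℤ) (N:ℤ), Emin t N (2*h) ≤
      ∑ k ∈ Finset.Icc (1:ℤ) ((2*N : ℕ):ℤ), Emin t N k := by
    have himg : ∑ h ∈ Finset.Icc (1:ℤ) (N:ℤ), Emin t N (2*h) =
        ∑ k ∈ (Finset.Icc (1:ℤ) (N:ℤ)).image (fun h => 2*h), Emin t N k :=
      (Finset.sum_image (fun x _ y _ hxy => by omega)).symm
    rw [himg]
    apply Finset.sum_le_sum_of_subset_of_nonneg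
    · intro k hk
      simp only [Finset.mem_image, Finset.mem_Icc] at hk ⊢
      obtain ⟨h, hh, rfl⟩ := hk
      push_cast
      omega
    · intro k _ _
      exact Emin_nonneg t N k
  -- combine
  calc ‖S‖^2 = ‖∑ p ∈ I ×ˢ I, wexp (f p.1 - f p.2)‖ := h1
    _ = ‖∑ h ∈ Finset.Icc (-(N:ℤ)) (N:ℤ), ∑ p ∈ (I ×ˢ I).filter (fun p => p.1 - p.2 = h),
          wexp (f p.1 - f p.2)‖ := by rw [← h2]
    _ ≤ ∑ h ∈ Finset.Icc (-(N:ℤ)) (N:ℤ), ‖∑ p ∈ (I ×ˢ I).filter (fun p => p.1 - p.2 = h),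
          wexp (f p.1 - f p.2)‖ := norm_sum_le _ _
    _ ≤ ∑ h ∈ Finset.Icc (-(N:ℤ)) (N:ℤ), (if h = 0 then (N:ℝ) else Emin t N (2*|h|)) := by
        apply Finset.sum_le_sum
        intro h hh
        rw [h3 h]
        exact h4 h hh
    _ = (N:ℝ) + 2 * ∑ h ∈ Finset.Icc (1:ℤ) (N:ℤ), Emin t N (2*h) := h5
    _ ≤ (N:ℝ) + 2 * ∑ k ∈ Finset.Icc (1:ℤ) ((2*N : ℕ):ℤ), Emin t N k := by linarith [h6]

set_option maxHeartbeats 1000000 in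
theorem stmt11 :
    ∃ C : ℝ, 0 < C ∧ ∀ (a : ℤ) (q : ℕ), 2 ≤ q → Int.gcd a (q : ℤ) = 1 →
      ∀ t x : ℝ, |t - (a : ℝ) / (q : ℝ)| ≤ 1 / (q : ℝ) ^ 2 → ∀ N : ℕ,
        ‖∑ n ∈ Finset.Icc 1 N,
            Complex.exp (2 * Real.pi * Complex.I * ((t * (n : ℝ) ^ 2 + x * (n : ℝ) : ℝ) : ℂ))‖
          ≤ C * max ((N : ℝ) / Real.sqrt q)
              (max (Real.sqrt ((N : ℝ) * Real.log q)) (Real.sqrt ((q : ℝ) * Real.log q))) := by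
  refine ⟨9, by norm_num, ?_⟩
  intro a q hq hco t x ht N
  have hq0' : (0:ℝ) < q := by positivity
  set L := Real.log q with hL
  have hL2 : Real.log 2 ≤ L := Real.log_le_log (by norm_num) (by exact_mod_cast hq)
  have hLhalf : (1:ℝ)/2 < L := lt_of_lt_of_le (by linarith [Real.log_two_gt_d9]) hL2
  have hLpos : 0 < L := by linarith
  set M := max ((N:ℝ)^2/q) (max ((N:ℝ)*L) ((q:ℝ)*L)) with hM
  have hMq : (q:ℝ)*L ≤ M :=
    le_trans (le_max_right _ _) (le_max_right _ _)
  have hMn : (N:ℝ)*L ≤ M :=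
    le_trans (le_max_left _ _) (le_max_right _ _)
  have hMsq : (N:ℝ)^2/q ≤ M := le_max_left _ _
  have hM0 : 0 ≤ M := le_trans (by positivity) hMq
  have sqrt_mono : Monotone Real.sqrt := fun _ _ h => Real.sqrt_le_sqrt h
  have hmax : max ((N : ℝ) / Real.sqrt q) (max (Real.sqrt ((N : ℝ) * L)) (Real.sqrt ((q : ℝ) * L)))
      = Real.sqrt M := by
    rw [hM, sqrt_mono.map_max, sqrt_mono.map_max]
    congr 1
    rw [Real.sqrt_div (by positivity) (q:ℝ), Real.sqrt_sq (by positivity)]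
  rw [hmax]
  -- trivial case N = 0
  rcases Nat.eq_zero_or_pos N with rfl | hN
  · rw [show Finset.Icc 1 0 = (∅ : Finset ℕ) from Finset.Icc_eq_empty (by omega)]
    simp only [Finset.sum_empty, norm_zero]
    positivity
  -- identify the statement's sum with the wexp sum over ℤ
  have hsum_eq : ∑ n ∈ Finset.Icc 1 N,
      Complex.exp (2 * Real.pi * Complex.I * ((t * (n : ℝ) ^ 2 + x * (n : ℝ) : ℝ) : ℂ)) =
      ∑ n ∈ Finset.Icc (1:ℤ) (N:ℤ), wexp (t*(n:ℝ)^2 + x*(n:ℝ)) := by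
    refine Finset.sum_nbij' (fun n => (n:ℤ)) (fun n => n.toNat) ?_ ?_ ?_ ?_ ?_
    · intro n hn; simp only [Finset.mem_Icc] at hn ⊢; omega
    · intro n hn; simp only [Finset.mem_Icc] at hn ⊢; omega
    · intro n hn; simp
    · intro n hn; simp only [Finset.mem_Icc] at hn; omega
    · intro n hn
      unfold wexp
      push_cast
      ring_nf
  rw [hsum_eq]
  set S := ∑ n ∈ Finset.Icc (1:ℤ) (N:ℤ), wexp (t*(n:ℝ)^2 + x*(n:ℝ)) with hS
  -- the squared bound
  have hsq : ‖S‖^2 ≤ 81 * M := by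
    have h1 := weyl_diff t x N hN
    have h2 := cover_lemma a q hq hco t ht N (2*N) (Emin t N)
      (Emin_nonneg t N) (Emin_le_N t N) (Emin_le_inv t N)
    have hJ : (((2*N)/q + 1 : ℕ):ℝ) ≤ 2*(N:ℝ)/q + 1 := by
      push_cast
      have := Nat.cast_div_le (α := ℝ) (m := 2*N) (n := q)
      push_cast at this
      linarith
    have hblock_pos : (0:ℝ) ≤ 4*(N:ℝ) + 2*(q:ℝ)*(1 + L) := by positivity
    have h3 : ∑ k ∈ Finset.Icc (1:ℤ) ((2*N : ℕ):ℤ), Emin t N k ≤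
        (2*(N:ℝ)/q + 1) * (4*(N:ℝ) + 2*(q:ℝ)*(1 + L)) := by
      refine le_trans h2 (mul_le_mul_of_nonneg_right hJ hblock_pos)
    have hN1 : (1:ℝ) ≤ (N:ℝ) := by exact_mod_cast hN
    have hexp : (2*(N:ℝ)/q + 1) * (4*(N:ℝ) + 2*(q:ℝ)*(1 + L)) =
        8*((N:ℝ)^2/q) + 8*(N:ℝ) + 4*((N:ℝ)*L) + 2*(q:ℝ) + 2*((q:ℝ)*L) := by
      field_simp
      ring
    have hfin : (N:ℝ) + 2 * ((2*(N:ℝ)/q + 1) * (4*(N:ℝ) + 2*(q:ℝ)*(1 + L))) ≤ 81 * M := by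
      rw [hexp]
      have e1 : (N:ℝ) ≤ 2*((N:ℝ)*L) := by nlinarith
      have e2 : (q:ℝ) ≤ 2*((q:ℝ)*L) := by nlinarith
      linarith
    calc ‖S‖^2 ≤ (N:ℝ) + 2 * ∑ k ∈ Finset.Icc (1:ℤ) ((2*N : ℕ):ℤ), Emin t N k := h1
      _ ≤ (N:ℝ) + 2 * ((2*(N:ℝ)/q + 1) * (4*(N:ℝ) + 2*(q:ℝ)*(1 + L))) := by linarith
      _ ≤ 81 * M := hfin
  -- conclude
  have h0 : 0 ≤ ‖S‖ := norm_nonneg _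
  have := Real.sqrt_le_sqrt hsq
  rw [Real.sqrt_sq h0] at this
  refine le_trans this ?_
  rw [show (81:ℝ) * M = (9 * Real.sqrt M)^2 by
    rw [mul_pow, Real.sq_sqrt hM0]; norm_num]
  rw [Real.sqrt_sq (by positivity)]
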